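/- Let 0 < m ≤ L < L̄, set δ_L = (L̄ − L)/L̄, and let δ_λ > 0. Let s ∈ (0, L̄] and ℓ ∈ [m, L] with |s − ℓ| ≥ δ_λ, and let ζ, ξ denote the two complex eigenvalues of Ḡ(s, ℓ). Then |ζ − ξ| = ((1 + β̄(s))/L̄) · sqrt( (L̄ − ℓ)·|s − ℓ| ); in particular |ζ − ξ| ≥ sqrt( δ_L δ_λ / L̄ ), so the two eigenvalues are separated by a positive amount independent of s and ℓ. -/

import Mathlib

/-- `β(s) = (√L − √s)/(√L + √s)`. -/
noncomputable def momBeta (L s : ℝ) : ℝ :=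
  (Real.sqrt L - Real.sqrt s) / (Real.sqrt L + Real.sqrt s)

/-- The complex square root of a real number: `√x` if `x ≥ 0`, `i√(−x)` otherwise. -/
noncomputable def csqrt (x : ℝ) : ℂ :=
  if 0 ≤ x then ((Real.sqrt x : ℝ) : ℂ) else Complex.I * ((Real.sqrt (-x) : ℝ) : ℂ)

/-- The discriminant `((1+β(s))²/4)(1 − ℓ/L)² − β(s)(1 − ℓ/L)`. -/
noncomputable def discr (L s ℓ : ℝ) : ℝ :=
  ((1 + momBeta L s) / 2) ^ 2 * (1 - ℓ / L) ^ 2 - momBeta L s * (1 - ℓ / L)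

/-- The eigenvalue `((1+β(s))/2)(1 − ℓ/L) + sqrt(discriminant)` of `G(s, ℓ)`. -/
noncomputable def eigP (L s ℓ : ℝ) : ℂ :=
  (((1 + momBeta L s) / 2 * (1 - ℓ / L) : ℝ) : ℂ) + csqrt (discr L s ℓ)

/-- The eigenvalue `((1+β(s))/2)(1 − ℓ/L) − sqrt(discriminant)` of `G(s, ℓ)`. -/
noncomputable def eigM (L s ℓ : ℝ) : ℂ :=
  (((1 + momBeta L s) / 2 * (1 - ℓ / L) : ℝ) : ℂ) - csqrt (discr L s ℓ)

/-- `ρ(s, ℓ)`: the maximum modulus of the two eigenvalues of `G(s, ℓ)`. -/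
noncomputable def specRho (L s ℓ : ℝ) : ℝ :=
  max ‖eigP L s ℓ‖ ‖eigM L s ℓ‖

lemma abs_csqrt (x : ℝ) : ‖csqrt x‖ = Real.sqrt |x| := by
  unfold csqrt
  split_ifs with h
  · rw [abs_of_nonneg h, Complex.norm_real, Real.norm_of_nonneg (Real.sqrt_nonneg _)]
  · rw [abs_of_neg (lt_of_not_ge h), norm_mul, Complex.norm_I, Complex.norm_real,
      Real.norm_of_nonneg (Real.sqrt_nonneg _), one_mul]

lemma momBeta_key {Lbar s : ℝ} (hs0 : 0 < s) (hsLbar : s ≤ Lbar) :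
    momBeta Lbar s * (4 * Lbar) = (1 + momBeta Lbar s) ^ 2 * (Lbar - s) := by
  have hL0 : (0:ℝ) < Lbar := lt_of_lt_of_le hs0 hsLbar
  have hsq : Real.sqrt s ^ 2 = s := Real.sq_sqrt hs0.le
  have hLq : Real.sqrt Lbar ^ 2 = Lbar := Real.sq_sqrt hL0.le
  have hd : 0 < Real.sqrt Lbar + Real.sqrt s :=
    add_pos (Real.sqrt_pos.mpr hL0) (Real.sqrt_pos.mpr hs0)
  unfold momBeta
  field_simp
  linear_combination (4*s) * hLq - (4*Lbar) * hsq

/-- (Lemma `la:lem:Gi-eigenvalue-separation`.) For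
`0 < m ≤ L < L̄`, `δ_L = (L̄ − L)/L̄`, `δ_λ > 0`, `s ∈ (0, L̄]`, `ℓ ∈ [m, L]`
with `|s − ℓ| ≥ δ_λ`, the two eigenvalues `ζ, ξ` of `Ḡ(s, ℓ)` satisfy
`|ζ − ξ| = ((1 + β̄(s))/L̄)√((L̄ − ℓ)|s − ℓ|) ≥ √(δ_L δ_λ / L̄)`. -/
theorem stmt14 {Lbar L m dLam : ℝ} (hm : 0 < m) (hmL : m ≤ L) (hLLbar : L < Lbar)
    (hdLam : 0 < dLam) {s ℓ : ℝ} (hs0 : 0 < s) (hsLbar : s ≤ Lbar)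
    (hlm : m ≤ ℓ) (hlL : ℓ ≤ L) (hsep : dLam ≤ |s - ℓ|) :
    ‖eigP Lbar s ℓ - eigM Lbar s ℓ‖ =
      (1 + momBeta Lbar s) / Lbar * Real.sqrt ((Lbar - ℓ) * |s - ℓ|) ∧
    Real.sqrt ((Lbar - L) / Lbar * dLam / Lbar) ≤
      ‖eigP Lbar s ℓ - eigM Lbar s ℓ‖ := by
  have hL0 : (0:ℝ) < Lbar := lt_of_lt_of_le hs0 hsLbar
  set b := momBeta Lbar s with hb
  have hb0 : 0 ≤ b := by
    apply div_nonneg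
    · simp [sub_nonneg, Real.sqrt_le_sqrt hsLbar]
    · positivity
  have hb1 : (0:ℝ) < 1 + b := by linarith
  -- discriminant formula
  have hkey := momBeta_key hs0 hsLbar
  have hdiscr : discr Lbar s ℓ = ((1 + b) / 2) ^ 2 * ((Lbar - ℓ) * (s - ℓ) / Lbar ^ 2) := by
    unfold discr
    rw [← hb]
    field_simp
    linear_combination (-(Lbar-ℓ)) * hkey
  have habsd : |discr Lbar s ℓ| = ((1 + b) / 2) ^ 2 * ((Lbar - ℓ) * |s - ℓ| / Lbar ^ 2) := by
    rw [hdiscr, abs_mul, abs_of_nonneg (sq_nonneg _), abs_div, abs_mul,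
      abs_of_nonneg (by linarith : (0:ℝ) ≤ Lbar - ℓ), abs_of_nonneg (sq_nonneg Lbar)]
  have hdiff : eigP Lbar s ℓ - eigM Lbar s ℓ = 2 * csqrt (discr Lbar s ℓ) := by
    unfold eigP eigM; ring
  have hmain : ‖eigP Lbar s ℓ - eigM Lbar s ℓ‖ =
      (1 + b) / Lbar * Real.sqrt ((Lbar - ℓ) * |s - ℓ|) := by
    rw [hdiff, norm_mul, abs_csqrt, habsd]
    rw [Real.sqrt_mul (sq_nonneg _), Real.sqrt_sq (by positivity : (0:ℝ) ≤ (1+b)/2),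
      Real.sqrt_div (mul_nonneg (by linarith) (abs_nonneg _)),
      Real.sqrt_sq hL0.le]
    simp only [Complex.norm_two]
    field_simp
  refine ⟨hmain, ?_⟩
  rw [hmain]
  have h1 : Real.sqrt ((Lbar - L) / Lbar * dLam / Lbar) =
      1 / Lbar * Real.sqrt ((Lbar - L) * dLam) := by
    rw [show (Lbar - L) / Lbar * dLam / Lbar = (Lbar - L) * dLam / Lbar ^ 2 by ring]
    rw [Real.sqrt_div (mul_nonneg (by linarith) hdLam.le), Real.sqrt_sq hL0.le]
    ring
  rw [h1]
  have hAB : Real.sqrt ((Lbar - L) * dLam) ≤ Real.sqrt ((Lbar - ℓ) * |s - ℓ|) := by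
    apply Real.sqrt_le_sqrt
    have h1 : 0 ≤ Lbar - L := by linarith
    nlinarith [abs_nonneg (s - ℓ)]
  have hA : 0 ≤ Real.sqrt ((Lbar - L) * dLam) := Real.sqrt_nonneg _
  calc 1 / Lbar * Real.sqrt ((Lbar - L) * dLam)
      ≤ (1 + b) / Lbar * Real.sqrt ((Lbar - L) * dLam) := by
        apply mul_le_mul_of_nonneg_right _ hA
        gcongr
        linarith
    _ ≤ (1 + b) / Lbar * Real.sqrt ((Lbar - ℓ) * |s - ℓ|) := by
        apply mul_le_mul_of_nonneg_left hAB (by positivity)
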